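/- In a Grothendieck topos Sh(C, τ), for any monomorphism ι : F ⇒ a y(x) into a sheafified representable, there is an epimorphic family of maps β_i : a y(u_i) ⇒ F from sheafified representables such that each composite ι ∘ β_i equals a y(g_i) for some morphism g_i : u_i → x of C. -/

import Mathlib

open CategoryTheory Opposite

section Aux
variable {C : Type} [SmallCategory C] (J : GrothendieckTopology C)

/-- The map `a y(u) ⟶ G` corresponding to a section `s ∈ G(u)`. -/
noncomputable def auxB (G : Sheaf J (Type)) (u : C) (s : G.val.obj (op u)) :
    (yoneda ⋙ presheafToSheaf J (Type)).obj u ⟶ G :=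
  ((sheafificationAdjunction J (Type)).homEquiv (yoneda.obj u) G).symm (yonedaEquiv.symm s)

lemma auxB_injective (G : Sheaf J (Type)) (u : C) :
    Function.Injective (auxB J G u) := fun s t h => by
  have := ((sheafificationAdjunction J (Type)).homEquiv (yoneda.obj u) G).symm.injective h
  exact yonedaEquiv.symm.injective this

lemma auxB_comp (G G' : Sheaf J (Type)) (u : C) (s : G.val.obj (op u)) (h : G ⟶ G') :
    auxB J G u s ≫ h = auxB J G' u (h.hom.app (op u) s) := by
  rw [auxB, auxB, ← Adjunction.homEquiv_naturality_right_symm,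
    yonedaEquiv_symm_naturality_right]
  rfl

lemma auxB_yoneda (x u : C) (g : u ⟶ x) :
    (yoneda ⋙ presheafToSheaf J (Type)).map g =
      auxB J ((yoneda ⋙ presheafToSheaf J (Type)).obj x) u
        ((toSheafify J (yoneda.obj x)).app (op u) g) := by
  apply ((sheafificationAdjunction J (Type)).homEquiv (yoneda.obj u) _).injective
  rw [auxB, Equiv.apply_symm_apply]
  apply yonedaEquiv.injective
  rw [Equiv.apply_symm_apply]
  have : ((sheafificationAdjunction J (Type)).homEquiv (yoneda.obj u) _)
      ((yoneda ⋙ presheafToSheaf J (Type)).map g) =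
      yoneda.map g ≫ toSheafify J (yoneda.obj x) := by
    rw [Adjunction.homEquiv_unit]
    have := (sheafificationAdjunction J (Type)).unit.naturality (yoneda.map g)
    dsimp at this ⊢
    rw [← this]
  rw [this, yonedaEquiv_comp, yonedaEquiv_yoneda_map]

end Aux

theorem mono_into_sheafified_representable_covered
    (C : Type) [SmallCategory C] (J : GrothendieckTopology C)
    (x : C) (F : Sheaf J (Type))
    (ι : F ⟶ (yoneda ⋙ presheafToSheaf J (Type)).obj x) (hι : Mono ι) :
    ∃ (I : Type) (u : I → C)
      (β : ∀ i, (yoneda ⋙ presheafToSheaf J (Type)).obj (u i) ⟶ F)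
      (g : ∀ i, u i ⟶ x),
      (∀ (G : Sheaf J (Type)) (h k : F ⟶ G), (∀ i, β i ≫ h = β i ≫ k) → h = k) ∧
      ∀ i, β i ≫ ι = (yoneda ⋙ presheafToSheaf J (Type)).map (g i) := by
  classical
  refine ⟨Σ u : C, {s : F.val.obj (op u) // ∃ g : u ⟶ x,
      ι.hom.app (op u) s = (toSheafify J (yoneda.obj x)).app (op u) g},
    fun i => i.1, fun i => auxB J F i.1 i.2.1, fun i => i.2.2.choose, ?_, ?_⟩
  · intro G h k hyp
    ext U t
    -- use separatedness of G along the image sieve of `ι.val.app U t`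
    have hsep := (Presieve.IsSheaf.isSeparated (J := J) (P := G.val)
      ((isSheaf_iff_isSheaf_of_type J G.val).mp G.cond))
      (Presheaf.imageSieve (toSheafify J (yoneda.obj x)) (ι.hom.app U t))
      (Presheaf.imageSieve_mem J (toSheafify J (yoneda.obj x)) (ι.hom.app U t))
    refine hsep.ext ?_
    intro Y f hf
    obtain ⟨g, hg⟩ := hf
    have hi : ι.hom.app (op Y) (F.val.map f.op t) =
        (toSheafify J (yoneda.obj x)).app (op Y) g :=
      (NatTrans.naturality_apply ι.hom f.op t).trans hg.symm
    have := hyp ⟨Y, F.val.map f.op t, g, hi⟩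
    rw [auxB_comp, auxB_comp] at this
    have := auxB_injective J G Y this
    dsimp at this
    have h1 := NatTrans.naturality_apply h.hom f.op t
    have h2 := NatTrans.naturality_apply k.hom f.op t
    dsimp at h1 h2
    exact h1.symm.trans (this.trans h2)
  · intro i
    rw [auxB_comp, auxB_yoneda J x i.1 i.2.2.choose]
    exact congrArg (auxB J _ i.1) i.2.2.choose_spec
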